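/- Let a > 0. In the zero-correlation case the rate function satisfies the symmetry relation J_X(y; a, 0) − J_X(−y; a, 0) = 2ay for every y ∈ ℝ. -/
import Mathlib


open MeasureTheory ProbabilityTheory Filter Real

/-- The variational rate function `I(u,v)`: infimum of `4∫₀¹ f'(z)² dz` over absolutely
continuous `f : [0,1] → ℝ` (written as `f(z) = ∫₀ᶻ g`) with square-integrable derivative `g`,
`f(0) = 0`, `∫₀¹ e^{2 f(z)} dz = u` and `e^{f(1)} = v`. -/
noncomputable def ratefun (u v : ℝ) : ℝ :=
  sInf {r : ℝ | ∃ g : ℝ → ℝ,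
    IntervalIntegrable g volume 0 1 ∧
    IntervalIntegrable (fun z => (g z) ^ 2) volume 0 1 ∧
    (∫ z in (0:ℝ)..(1:ℝ), Real.exp (2 * ∫ t in (0:ℝ)..z, g t)) = u ∧
    Real.exp (∫ t in (0:ℝ)..(1:ℝ), g t) = v ∧
    r = 4 * ∫ z in (0:ℝ)..(1:ℝ), (g z) ^ 2}


/-- Symmetry relation of the zero-correlation rate function:
`J_X(y;a,0) − J_X(−y;a,0) = 2ay`. -/
theorem ratefun_JX_symmetry (a : ℝ) (ha : 0 < a)
    (JX : ℝ → ℝ)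
    (hJX : ∀ y : ℝ, JX y =
      sInf {r : ℝ | ∃ u v : ℝ, 0 < u ∧ 0 < v ∧
        r = (1 / 2) * ratefun u v + (a / u) * (y + u / 2) ^ 2}) :
    ∀ y : ℝ, JX y - JX (-y) = 2 * a * y := by
  have hrf : ∀ u v : ℝ, 0 ≤ ratefun u v := by
    intro u v
    apply Real.sInf_nonneg
    rintro r ⟨g, hg, hg2, hu, hv, rfl⟩
    have h : 0 ≤ ∫ z in (0:ℝ)..1, (g z)^2 :=
      intervalIntegral.integral_nonneg (by norm_num) (fun z _ => sq_nonneg _)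
    linarith
  set S : ℝ → Set ℝ := fun y => {r : ℝ | ∃ u v : ℝ, 0 < u ∧ 0 < v ∧
        r = (1 / 2) * ratefun u v + (a / u) * (y + u / 2) ^ 2} with hS
  have hne : ∀ y, (S y).Nonempty := fun y =>
    ⟨(1/2)*ratefun 1 1 + (a/1)*(y+1/2)^2, 1, 1, one_pos, one_pos, rfl⟩
  have hbdd : ∀ y, BddBelow (S y) := by
    intro y
    refine ⟨0, ?_⟩
    rintro r ⟨u, v, hu, hv, rfl⟩
    have h1 : 0 ≤ (a/u) * (y + u/2)^2 := mul_nonneg (div_nonneg ha.le hu.le) (sq_nonneg _)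
    have h2 := hrf u v
    linarith
  have key : ∀ y : ℝ, JX y ≤ JX (-y) + 2 * a * y := by
    intro y
    rw [hJX y, hJX (-y), ← sub_le_iff_le_add]
    apply le_csInf (hne (-y))
    rintro r ⟨u, v, hu, hv, rfl⟩
    rw [sub_le_iff_le_add]
    have hmem : (1/2)*ratefun u v + (a/u)*((-y) + u/2)^2 + 2*a*y ∈ S y := by
      refine ⟨u, v, hu, hv, ?_⟩
      field_simp
      ring
    exact csInf_le (hbdd y) hmem
  intro y
  have h1 := key y
  have h2 := key (-y)
  rw [neg_neg] at h2
  linarith
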